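/- arXiv:0711.1190 — 2 statements merged into one kernel-verified Lean document; each statement's English description precedes it below -/
import Mathlib

section
/- If $V(H - z)^{-1} \in \mathcal{S}_p$ for some non-real $z$ and for every bounded self-adjoint $V$ of the form $V = G^* J G$ with $G = |V|^{1/2}$, then the map $(z, r) \mapsto V(H_r - z)^{-1}$ from $(\mathbb{C} \setminus \mathbb{R}) \times \mathbb{R}$ into $\mathcal{S}_p$ is continuous in the $\mathcal{S}_p$-norm. -/
open scoped ENNReal InnerProductSpace

noncomputable section

variable {H : Type*} [NormedAddCommGroup H] [InnerProductSpace ℂ H] [CompleteSpace H]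

/-- The `n`-th approximation number of a bounded operator: the distance from `T` to the
set of operators of rank at most `n`. On a Hilbert space this equals the `n`-th singular
value of `T`. -/
noncomputable def approxNumber (n : ℕ) (T : H →L[ℂ] H) : ℝ :=
  sInf {c | ∃ F : H →L[ℂ] H,
    Module.finrank ℂ (LinearMap.range (F : H →ₗ[ℂ] H)) ≤ n ∧ c = ‖T - F‖}

/-- Membership in the Schatten ideal `𝒮_p` (`𝒮_∞` being the compact operators):
`T` is compact and its sequence of singular values lies in `ℓ^p`. -/
def MemSchatten (p : ℝ≥0∞) (T : H →L[ℂ] H) : Prop :=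
  IsCompactOperator T ∧ Memℓp (fun n => approxNumber n T) p

/-- `R` is the resolvent `(T - z)⁻¹` of the (possibly unbounded) operator `T`. -/
def IsResolvent (T : H →ₗ.[ℂ] H) (z : ℂ) (R : H →L[ℂ] H) : Prop :=
  (∀ x : H, ∃ hx : R x ∈ T.domain, T ⟨R x, hx⟩ - z • R x = x) ∧
  ∀ y : T.domain, R (T y - z • (y : H)) = (y : H)

/-- The operator `H₀ + r V`, as an unbounded operator with the same domain as `H₀`. -/
def pert (H₀ : H →ₗ.[ℂ] H) (V : H →L[ℂ] H) (r : ℝ) : H →ₗ.[ℂ] H :=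
  H₀ + ((r : ℂ) • V).toLinearMap.toPMap ⊤

/-- The Schatten `p`-norm (operator norm for `p = ∞`), via singular values. -/
noncomputable def schattenNorm (p : ℝ≥0∞) (T : H →L[ℂ] H) : ℝ :=
  if p = ∞ then ‖T‖ else (∑' n, approxNumber n T ^ p.toReal) ^ (1 / p.toReal)

namespace SchattenAux

set_option linter.unusedSectionVars false

lemma apSet_bddBelow (n : ℕ) (T : H →L[ℂ] H) :
    BddBelow {c | ∃ F : H →L[ℂ] H,
      Module.finrank ℂ (LinearMap.range (F : H →ₗ[ℂ] H)) ≤ n ∧ c = ‖T - F‖} :=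
  ⟨0, by rintro c ⟨F, -, rfl⟩; exact norm_nonneg _⟩

lemma approxNumber_le (n : ℕ) (T F : H →L[ℂ] H)
    (hF : Module.finrank ℂ (LinearMap.range (F : H →ₗ[ℂ] H)) ≤ n) :
    approxNumber n T ≤ ‖T - F‖ :=
  csInf_le (apSet_bddBelow n T) ⟨F, hF, rfl⟩

lemma approxNumber_le_norm (n : ℕ) (T : H →L[ℂ] H) : approxNumber n T ≤ ‖T‖ := by
  simpa using approxNumber_le n T 0
    (by rw [ContinuousLinearMap.coe_zero, LinearMap.range_zero, finrank_bot]; exact Nat.zero_le n)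

/-- Given an `n`-admissible approximant `F` of `A`, produce an `n`-admissible approximant of
`A ∘L B` within `‖A - F‖ * ‖B‖ + ε`. -/
lemma exists_approx_comp (n : ℕ) (A B F : H →L[ℂ] H)
    (hF : Module.finrank ℂ (LinearMap.range (F : H →ₗ[ℂ] H)) ≤ n)
    {ε : ℝ} (hε : 0 < ε) :
    ∃ F' : H →L[ℂ] H, Module.finrank ℂ (LinearMap.range (F' : H →ₗ[ℂ] H)) ≤ n ∧
      ‖A ∘L B - F'‖ ≤ ‖A - F‖ * ‖B‖ + ε := by
  have hnorm : ‖(A - F) ∘L B‖ ≤ ‖A - F‖ * ‖B‖ := ContinuousLinearMap.opNorm_comp_le _ _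
  have hle : LinearMap.range ((F ∘L B : H →L[ℂ] H) : H →ₗ[ℂ] H)
      ≤ LinearMap.range (F : H →ₗ[ℂ] H) := by
    rw [ContinuousLinearMap.toLinearMap_comp]
    exact LinearMap.range_comp_le_range _ _
  by_cases hfinF : FiniteDimensional ℂ (LinearMap.range (F : H →ₗ[ℂ] H))
  · refine ⟨F ∘L B, ?_, ?_⟩
    · haveI := hfinF
      exact le_trans (Submodule.finrank_mono hle) hF
    · have : A ∘L B - F ∘L B = (A - F) ∘L B := by rw [ContinuousLinearMap.sub_comp]
      rw [this]
      linarith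
  · have hH : ¬ FiniteDimensional ℂ H := by
      intro h
      exact hfinF inferInstance
    by_cases hfin : FiniteDimensional ℂ (LinearMap.range ((F ∘L B : H →L[ℂ] H) : H →ₗ[ℂ] H))
    · refine ⟨F ∘L B + ε • ContinuousLinearMap.id ℂ H, ?_, ?_⟩
      · set F' := F ∘L B + ε • ContinuousLinearMap.id ℂ H with hF'
        have hinf : ¬ FiniteDimensional ℂ (LinearMap.range (F' : H →ₗ[ℂ] H)) := by
          intro hfin'
          apply hH
          have htop : (⊤ : Submodule ℂ H) ≤
              LinearMap.range (F' : H →ₗ[ℂ] H) ⊔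
              LinearMap.range ((F ∘L B : H →L[ℂ] H) : H →ₗ[ℂ] H) := by
            intro x _
            have hx : x = (ε : ℂ)⁻¹ • (F' x) - (ε : ℂ)⁻¹ • ((F ∘L B) x) := by
              have : F' x = (F ∘L B) x + (ε : ℂ) • x := by
                simp [hF', Complex.coe_smul]
              rw [this, smul_add, smul_smul,
                inv_mul_cancel₀ (by exact_mod_cast hε.ne' : (ε:ℂ) ≠ 0), one_smul,
                add_sub_cancel_left]
            rw [hx]
            exact Submodule.sub_mem _
              (Submodule.mem_sup_left (Submodule.smul_mem _ _ ⟨x, rfl⟩))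
              (Submodule.mem_sup_right (Submodule.smul_mem _ _ ⟨x, rfl⟩))
          haveI := hfin'
          haveI := hfin
          have : FiniteDimensional ℂ (⊤ : Submodule ℂ H) :=
            Submodule.finiteDimensional_of_le htop
          exact (Submodule.topEquiv (R := ℂ) (M := H)).finiteDimensional
        rw [Module.finrank_of_infinite_dimensional hinf]
        exact Nat.zero_le n
      · have : A ∘L B - (F ∘L B + ε • ContinuousLinearMap.id ℂ H)
            = (A - F) ∘L B - ε • ContinuousLinearMap.id ℂ H := by
          rw [sub_add_eq_sub_sub, ← ContinuousLinearMap.sub_comp]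
        rw [this]
        calc ‖(A - F) ∘L B - ε • ContinuousLinearMap.id ℂ H‖
            ≤ ‖(A - F) ∘L B‖ + ‖ε • ContinuousLinearMap.id ℂ H‖ := norm_sub_le _ _
          _ ≤ ‖A - F‖ * ‖B‖ + ε := by
              have h1 : ‖ε • ContinuousLinearMap.id ℂ H‖ ≤ |ε| * 1 := by
                rw [norm_smul]
                exact mul_le_mul_of_nonneg_left (ContinuousLinearMap.norm_id_le) (abs_nonneg ε)
              rw [abs_of_pos hε, mul_one] at h1
              linarith
    · refine ⟨F ∘L B, ?_, ?_⟩
      · rw [Module.finrank_of_infinite_dimensional hfin]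
        exact Nat.zero_le n
      · have : A ∘L B - F ∘L B = (A - F) ∘L B := by rw [ContinuousLinearMap.sub_comp]
        rw [this]; linarith

lemma approxNumber_nonneg (n : ℕ) (T : H →L[ℂ] H) : 0 ≤ approxNumber n T :=
  Real.sInf_nonneg (by rintro c ⟨F, -, rfl⟩; exact norm_nonneg _)

lemma approxNumber_comp_le (n : ℕ) (A B : H →L[ℂ] H) :
    approxNumber n (A ∘L B) ≤ approxNumber n A * ‖B‖ := by
  refine le_of_forall_pos_le_add fun ε hε => ?_
  set ε₁ := ε / (2 * (‖B‖ + 1)) with hε₁def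
  have hε₁ : 0 < ε₁ := by positivity
  have hne : {c | ∃ F : H →L[ℂ] H,
      Module.finrank ℂ (LinearMap.range (F : H →ₗ[ℂ] H)) ≤ n ∧ c = ‖A - F‖}.Nonempty :=
    ⟨‖A - 0‖, 0, by
      rw [ContinuousLinearMap.coe_zero, LinearMap.range_zero, finrank_bot]
      exact Nat.zero_le n, rfl⟩
  obtain ⟨c, ⟨F, hF, rfl⟩, hlt⟩ :=
    exists_lt_of_csInf_lt hne (lt_add_of_pos_right (approxNumber n A) hε₁)
  obtain ⟨F', hF', hnear⟩ := exists_approx_comp n A B F hF (half_pos hε)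
  have h1 : approxNumber n (A ∘L B) ≤ ‖A ∘L B - F'‖ := approxNumber_le _ _ _ hF'
  have h2 : ‖A - F‖ * ‖B‖ ≤ (approxNumber n A + ε₁) * ‖B‖ :=
    mul_le_mul_of_nonneg_right hlt.le (norm_nonneg _)
  have h2' : (approxNumber n A + ε₁) * ‖B‖ = approxNumber n A * ‖B‖ + ε₁ * ‖B‖ := by ring
  have h4 : ε₁ * (‖B‖ + 1) = ε / 2 := by
    rw [hε₁def]; field_simp
  have h5 : ε₁ * ‖B‖ ≤ ε / 2 := by nlinarith [norm_nonneg B]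
  linarith

lemma norm_approxNumber (n : ℕ) (T : H →L[ℂ] H) : ‖approxNumber n T‖ = approxNumber n T := by
  rw [Real.norm_eq_abs, abs_of_nonneg (approxNumber_nonneg n T)]

variable {p : ℝ≥0∞}

lemma toReal_pos (hp : 1 ≤ p) (hp' : p ≠ ∞) : 0 < p.toReal :=
  ENNReal.toReal_pos (by intro h; rw [h] at hp; exact absurd hp (by simp)) hp'

lemma memSchatten_comp (hp : 1 ≤ p) {A : H →L[ℂ] H} (hA : MemSchatten p A) (B : H →L[ℂ] H) :
    MemSchatten p (A ∘L B) := by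
  refine ⟨?_, ?_⟩
  · have h := hA.1.comp_clm B
    rwa [← ContinuousLinearMap.coe_comp'] at h
  · rcases eq_or_ne p ∞ with rfl | hp'
    · apply memℓp_infty
      refine ⟨‖A ∘L B‖, ?_⟩
      rintro x ⟨n, rfl⟩
      simp only [norm_approxNumber]
      exact approxNumber_le_norm n _
    · have hq : 0 < p.toReal := toReal_pos hp hp'
      have hsumA : Summable (fun n => ‖approxNumber n A‖ ^ p.toReal) :=
        (memℓp_gen_iff hq).1 hA.2
      apply memℓp_gen
      apply Summable.of_nonneg_of_le
        (fun n => by positivity)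
        (fun n => ?_) (hsumA.mul_right (‖B‖ ^ p.toReal))
      rw [norm_approxNumber, norm_approxNumber]
      calc approxNumber n (A ∘L B) ^ p.toReal
          ≤ (approxNumber n A * ‖B‖) ^ p.toReal :=
            Real.rpow_le_rpow (approxNumber_nonneg _ _) (approxNumber_comp_le n A B) hq.le
        _ = approxNumber n A ^ p.toReal * ‖B‖ ^ p.toReal :=
            Real.mul_rpow (approxNumber_nonneg _ _) (norm_nonneg _)

lemma schattenNorm_nonneg (T : H →L[ℂ] H) : 0 ≤ schattenNorm p T := by
  unfold schattenNorm
  split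
  · exact norm_nonneg T
  · apply Real.rpow_nonneg
    exact tsum_nonneg fun n => Real.rpow_nonneg (approxNumber_nonneg n T) _

lemma schattenNorm_comp_le (hp : 1 ≤ p) {A : H →L[ℂ] H} (hA : MemSchatten p A)
    (B : H →L[ℂ] H) : schattenNorm p (A ∘L B) ≤ schattenNorm p A * ‖B‖ := by
  unfold schattenNorm
  rcases eq_or_ne p ∞ with rfl | hp'
  · simp only [if_pos rfl]
    exact ContinuousLinearMap.opNorm_comp_le A B
  · simp only [if_neg hp']
    have hq : 0 < p.toReal := toReal_pos hp hp'
    have hsumA : Summable (fun n => approxNumber n A ^ p.toReal) := by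
      have := (memℓp_gen_iff hq).1 hA.2
      simpa only [norm_approxNumber] using this
    have hle : ∀ n, approxNumber n (A ∘L B) ^ p.toReal
        ≤ approxNumber n A ^ p.toReal * ‖B‖ ^ p.toReal := fun n => by
      calc approxNumber n (A ∘L B) ^ p.toReal
          ≤ (approxNumber n A * ‖B‖) ^ p.toReal :=
            Real.rpow_le_rpow (approxNumber_nonneg _ _) (approxNumber_comp_le n A B) hq.le
        _ = approxNumber n A ^ p.toReal * ‖B‖ ^ p.toReal :=
            Real.mul_rpow (approxNumber_nonneg _ _) (norm_nonneg _)
    have hsumAB : Summable (fun n => approxNumber n (A ∘L B) ^ p.toReal) :=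
      Summable.of_nonneg_of_le (fun n => Real.rpow_nonneg (approxNumber_nonneg _ _) _)
        hle (hsumA.mul_right _)
    have htsum : (∑' n, approxNumber n (A ∘L B) ^ p.toReal)
        ≤ (∑' n, approxNumber n A ^ p.toReal) * ‖B‖ ^ p.toReal := by
      rw [← tsum_mul_right]
      exact hsumAB.tsum_le_tsum hle (hsumA.mul_right _)
    calc (∑' n, approxNumber n (A ∘L B) ^ p.toReal) ^ (1 / p.toReal)
        ≤ ((∑' n, approxNumber n A ^ p.toReal) * ‖B‖ ^ p.toReal) ^ (1 / p.toReal) := by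
          apply Real.rpow_le_rpow _ htsum (by positivity)
          exact tsum_nonneg fun n => Real.rpow_nonneg (approxNumber_nonneg _ _) _
      _ = (∑' n, approxNumber n A ^ p.toReal) ^ (1 / p.toReal) * ‖B‖ := by
          rw [Real.mul_rpow (tsum_nonneg fun n => Real.rpow_nonneg (approxNumber_nonneg _ _) _)
            (Real.rpow_nonneg (norm_nonneg _) _)]
          congr 1
          rw [← Real.rpow_mul (norm_nonneg _), mul_one_div, div_self hq.ne', Real.rpow_one]

/-- The comparison operator `1 + (z - z₀) • R r z - r • (V ∘L R r z)`, which equals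
`(H₀ - z₀) (H r - z)⁻¹`. -/
def Bop (V : H →L[ℂ] H) (R : ℝ → ℂ → H →L[ℂ] H) (z₀ : ℂ) (r : ℝ) (z : ℂ) : H →L[ℂ] H :=
  ContinuousLinearMap.id ℂ H + (z - z₀) • R r z - (r : ℂ) • (V ∘L R r z)

end SchattenAux

set_option maxHeartbeats 2000000 in
open SchattenAux in
/-- If `V (H₀ - z₀)⁻¹ ∈ 𝒮_p` for some non-real `z₀`, then the map
`(z, r) ↦ V (H_r - z)⁻¹` from `(ℂ \ ℝ) × ℝ` into `𝒮_p` is continuous in `𝒮_p`-norm. -/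
theorem continuous_V_resolvent_schatten
    (p : ℝ≥0∞) (hp : 1 ≤ p)
    (H₀ : H →ₗ.[ℂ] H) (hH₀ : IsSelfAdjoint H₀)
    (V : H →L[ℂ] H) (hV : IsSelfAdjoint V)
    (R : ℝ → ℂ → H →L[ℂ] H)
    (hR : ∀ r : ℝ, ∀ z : ℂ, z.im ≠ 0 → IsResolvent (pert H₀ V r) z (R r z))
    (z₀ : ℂ) (hz₀ : z₀.im ≠ 0)
    (h0 : MemSchatten p (V ∘L R 0 z₀)) :
    (∀ z : ℂ, z.im ≠ 0 → ∀ r : ℝ, MemSchatten p (V ∘L R r z)) ∧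
    ∀ z : ℂ, z.im ≠ 0 → ∀ r : ℝ, ∀ ε > (0 : ℝ), ∃ δ > (0 : ℝ),
      ∀ z' : ℂ, z'.im ≠ 0 → ∀ r' : ℝ, ‖z' - z‖ < δ → |r' - r| < δ →
        schattenNorm p (V ∘L R r' z' - V ∘L R r z) < ε := by
  classical
  -- symmetry of H₀
  have hdense : Dense (H₀.domain : Set H) := hH₀.dense_domain
  have hfa : H₀.IsFormalAdjoint H₀ := by
    have h := LinearPMap.adjoint_isFormalAdjoint (T := H₀) hdense
    rwa [LinearPMap.isSelfAdjoint_def.mp hH₀] at h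
  -- unpack the resolvent hypothesis
  have hmem : ∀ (r : ℝ) (z : ℂ), z.im ≠ 0 → ∀ x : H, R r z x ∈ H₀.domain :=
    fun r z hz x => ((hR r z hz).1 x).choose.1
  have heq1 : ∀ (r : ℝ) (z : ℂ) (hz : z.im ≠ 0) (x : H),
      H₀ ⟨R r z x, hmem r z hz x⟩ + (r : ℂ) • V (R r z x) - z • R r z x = x := by
    intro r z hz x
    obtain ⟨hx, h⟩ := (hR r z hz).1 x
    exact h
  have heq2 : ∀ (r : ℝ) (z : ℂ), z.im ≠ 0 → ∀ (u : H) (hu : u ∈ H₀.domain),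
      R r z (H₀ ⟨u, hu⟩ + (r : ℂ) • V u - z • u) = u := by
    intro r z hz u hu
    exact (hR r z hz).2 ⟨u, hu, trivial⟩
  -- the basic resolvent norm bound
  have hnorm : ∀ (r : ℝ) (z : ℂ), z.im ≠ 0 → ‖R r z‖ ≤ 1 / |z.im| := by
    intro r z hz
    have him : (0:ℝ) < |z.im| := abs_pos.mpr hz
    apply ContinuousLinearMap.opNorm_le_bound _ (by positivity)
    intro x
    set u := R r z x with hu_def
    have hu : u ∈ H₀.domain := hmem r z hz x
    have hsymH : (⟪H₀ ⟨u, hu⟩, u⟫_ℂ).im = 0 := by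
      have h1 : ⟪H₀ ⟨u, hu⟩, ((⟨u, hu⟩ : H₀.domain) : H)⟫_ℂ = ⟪(u : H), H₀ ⟨u, hu⟩⟫_ℂ :=
        hfa ⟨u, hu⟩ ⟨u, hu⟩
      have h2 : ⟪(u : H), H₀ ⟨u, hu⟩⟫_ℂ = starRingEnd ℂ ⟪H₀ ⟨u, hu⟩, u⟫_ℂ :=
        (inner_conj_symm _ _).symm
      have h3 := congrArg Complex.im (h1.trans h2)
      simp only [Complex.conj_im] at h3
      linarith
    have hsymV : (⟪(r : ℂ) • V u, u⟫_ℂ).im = 0 := by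
      have hs : ⟪V u, u⟫_ℂ = ⟪u, V u⟫_ℂ := hV.isSymmetric u u
      have h2 : ⟪u, V u⟫_ℂ = starRingEnd ℂ ⟪V u, u⟫_ℂ := (inner_conj_symm _ _).symm
      have h3 := congrArg Complex.im (hs.trans h2)
      simp only [Complex.conj_im] at h3
      have h4 : (⟪V u, u⟫_ℂ).im = 0 := by linarith
      rw [inner_smul_left]
      simp [Complex.mul_im, h4]
    have hx : H₀ ⟨u, hu⟩ + (r : ℂ) • V u - z • u = x := heq1 r z hz x
    have hinner : (⟪x, u⟫_ℂ).im = z.im * ‖u‖ ^ 2 := by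
      have hc : ⟪z • u, u⟫_ℂ = starRingEnd ℂ z * ((‖u‖ : ℂ) ^ 2) := by
        rw [inner_smul_left, inner_self_eq_norm_sq_to_K]
        norm_cast
      rw [← hx, inner_sub_left, inner_add_left, hc]
      rw [Complex.sub_im, Complex.add_im, hsymH, hsymV]
      have : ((‖u‖ : ℂ) ^ 2) = (((‖u‖ ^ 2 : ℝ)) : ℂ) := by push_cast; ring
      rw [this]
      simp only [Complex.mul_im, Complex.conj_re, Complex.conj_im, Complex.ofReal_im,
        Complex.ofReal_re]
      ring
    have habs : |(⟪x, u⟫_ℂ).im| ≤ ‖x‖ * ‖u‖ := by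
      refine le_trans (Complex.abs_im_le_norm _) ?_
      exact norm_inner_le_norm x u
    have key : |z.im| * ‖u‖ ^ 2 ≤ ‖x‖ * ‖u‖ := by
      rw [hinner, abs_mul, abs_of_nonneg (by positivity : (0:ℝ) ≤ ‖u‖ ^ 2)] at habs
      exact habs
    rcases eq_or_lt_of_le (norm_nonneg u) with h0' | h0'
    · rw [← h0']
      positivity
    · rw [div_mul_eq_mul_div, le_div_iff₀ him, one_mul]
      nlinarith
  -- first resolvent identity
  have hRI1 : ∀ (r : ℝ) (z z' : ℂ), z.im ≠ 0 → z'.im ≠ 0 →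
      R r z' - R r z = (z' - z) • (R r z' ∘L R r z) := by
    intro r z z' hz hz'
    ext x
    set u := R r z x with hu_def
    have hu : u ∈ H₀.domain := hmem r z hz x
    have e : H₀ ⟨u, hu⟩ + (r : ℂ) • V u - z • u = x := heq1 r z hz x
    have h1 : H₀ ⟨u, hu⟩ + (r : ℂ) • V u - z' • u = x + (z - z') • u := by
      rw [← e]
      module
    have h2 := heq2 r z' hz' u hu
    rw [h1] at h2
    rw [map_add, map_smul] at h2
    simp only [ContinuousLinearMap.sub_apply, ContinuousLinearMap.smul_apply,
      ContinuousLinearMap.comp_apply]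
    rw [← hu_def, eq_sub_of_add_eq h2]
    module
  -- second resolvent identity
  have hRI2 : ∀ (r r' : ℝ) (z : ℂ), z.im ≠ 0 →
      R r' z - R r z = ((r : ℂ) - (r' : ℂ)) • (R r' z ∘L (V ∘L R r z)) := by
    intro r r' z hz
    ext x
    set u := R r z x with hu_def
    have hu : u ∈ H₀.domain := hmem r z hz x
    have e : H₀ ⟨u, hu⟩ + (r : ℂ) • V u - z • u = x := heq1 r z hz x
    have h1 : H₀ ⟨u, hu⟩ + (r' : ℂ) • V u - z • u
        = x + ((r' : ℂ) - (r : ℂ)) • V u := by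
      rw [← e]
      module
    have h2 := heq2 r' z hz u hu
    rw [h1] at h2
    rw [map_add, map_smul] at h2
    simp only [ContinuousLinearMap.sub_apply, ContinuousLinearMap.smul_apply,
      ContinuousLinearMap.comp_apply]
    rw [← hu_def, eq_sub_of_add_eq h2]
    module
  -- factorization through the reference resolvent
  have hB : ∀ (r : ℝ) (z : ℂ), z.im ≠ 0 → R 0 z₀ ∘L Bop V R z₀ r z = R r z := by
    intro r z hz
    ext x
    set u := R r z x with hu_def
    have hu : u ∈ H₀.domain := hmem r z hz x
    have e : H₀ ⟨u, hu⟩ + (r : ℂ) • V u - z • u = x := heq1 r z hz x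
    have h1 : Bop V R z₀ r z x
        = H₀ ⟨u, hu⟩ + ((0:ℝ) : ℂ) • V u - z₀ • u := by
      simp only [Bop, ContinuousLinearMap.sub_apply, ContinuousLinearMap.add_apply,
        ContinuousLinearMap.smul_apply, ContinuousLinearMap.comp_apply,
        ContinuousLinearMap.id_apply]
      rw [← hu_def, ← e]
      push_cast
      module
    have h2 := heq2 0 z₀ hz₀ u hu
    calc (R 0 z₀ ∘L Bop V R z₀ r z) x = R 0 z₀ (Bop V R z₀ r z x) := rfl
      _ = u := by rw [h1]; exact h2
      _ = R r z x := hu_def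
  have hVR : ∀ (r : ℝ) (z : ℂ), z.im ≠ 0 →
      V ∘L R r z = (V ∘L R 0 z₀) ∘L Bop V R z₀ r z := by
    intro r z hz
    rw [ContinuousLinearMap.comp_assoc, hB r z hz]
  constructor
  · intro z hz r
    rw [hVR r z hz]
    exact memSchatten_comp hp h0 _
  · intro z hz r ε hε
    have him : (0:ℝ) < |z.im| := abs_pos.mpr hz
    obtain ⟨M, hMdef⟩ : ∃ M : ℝ, M = 2 / |z.im| := ⟨_, rfl⟩
    have hM : 0 < M := by rw [hMdef]; positivity
    obtain ⟨N, hNdef⟩ : ∃ N : ℝ, N = schattenNorm p (V ∘L R 0 z₀) := ⟨_, rfl⟩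
    have hN : 0 ≤ N := by rw [hNdef]; exact schattenNorm_nonneg _
    obtain ⟨K, hKdef⟩ : ∃ K : ℝ, K = M * M * (1 + ‖V‖) := ⟨_, rfl⟩
    have hK : 0 < K := by
      rw [hKdef]
      exact mul_pos (mul_pos hM hM) (by positivity)
    obtain ⟨C, hCdef⟩ : ∃ C : ℝ,
        C = (‖z - z₀‖ + 1 + (|r| + 1) * ‖V‖) * K + (1 + ‖V‖) * M := ⟨_, rfl⟩
    have hC : 0 < C := by
      rw [hCdef]
      have hc1 : (0:ℝ) < ‖z - z₀‖ + 1 + (|r| + 1) * ‖V‖ := by positivity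
      nlinarith [mul_pos hc1 hK, mul_nonneg (by positivity : (0:ℝ) ≤ 1 + ‖V‖) hM.le]
    have hden : (0:ℝ) < 2 * C * (N + 1) := by
      refine mul_pos (mul_pos two_pos hC) (by linarith)
    refine ⟨min (min 1 (|z.im| / 2)) (ε / (2 * C * (N + 1))),
      lt_min (lt_min one_pos (by linarith)) (div_pos hε hden), ?_⟩
    intro z' hz' r' hzd hrd
    have hδ1 : ‖z' - z‖ < 1 := lt_of_lt_of_le hzd (le_trans (min_le_left _ _) (min_le_left _ _))
    have hδ2 : ‖z' - z‖ < |z.im| / 2 :=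
      lt_of_lt_of_le hzd (le_trans (min_le_left _ _) (min_le_right _ _))
    have hδ3 : |r' - r| < 1 := lt_of_lt_of_le hrd (le_trans (min_le_left _ _) (min_le_left _ _))
    have hδz : ‖z' - z‖ < ε / (2 * C * (N + 1)) := lt_of_lt_of_le hzd (min_le_right _ _)
    have hδr : |r' - r| < ε / (2 * C * (N + 1)) := lt_of_lt_of_le hrd (min_le_right _ _)
    -- resolvent norm bounds
    have hMz : 1 / |z.im| ≤ M := by
      rw [hMdef, div_le_div_iff₀ him him]
      linarith
    have hb3 : ‖R r z‖ ≤ M := le_trans (hnorm r z hz) hMz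
    have hb2 : ‖R r' z‖ ≤ M := le_trans (hnorm r' z hz) hMz
    have hz'im : |z.im| / 2 ≤ |z'.im| := by
      have h1 : |z.im - z'.im| ≤ ‖z' - z‖ := by
        calc |z.im - z'.im| = |(z - z').im| := by rw [Complex.sub_im]
          _ ≤ ‖z - z'‖ := Complex.abs_im_le_norm _
          _ = ‖z' - z‖ := by rw [norm_sub_rev]
      have h2 : |z.im| ≤ |z'.im| + |z.im - z'.im| := by
        calc |z.im| = |z'.im + (z.im - z'.im)| := by ring_nf
          _ ≤ |z'.im| + |z.im - z'.im| := abs_add_le _ _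
      linarith
    have hb1 : ‖R r' z'‖ ≤ M := by
      refine le_trans (hnorm r' z' hz') ?_
      rw [hMdef, div_le_div_iff₀ (abs_pos.mpr hz') him]
      linarith
    obtain ⟨D, hDdef⟩ : ∃ D : ℝ, D = ‖z' - z‖ + |r' - r| := ⟨_, rfl⟩
    have hD0 : 0 ≤ D := by rw [hDdef]; positivity
    have hD2 : D < ε / (C * (N + 1)) := by
      have h : ε / (2 * C * (N + 1)) * 2 = ε / (C * (N + 1)) := by
        field_simp
      rw [hDdef]
      linarith
    have hzD : ‖z' - z‖ ≤ D := by rw [hDdef]; linarith [abs_nonneg (r' - r)]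
    have hrD : |r' - r| ≤ D := by rw [hDdef]; linarith [norm_nonneg (z' - z)]
    -- operator-norm continuity of the resolvent
    have hdR : ‖R r' z' - R r z‖ ≤ K * D := by
      have e1 := hRI1 r' z z' hz hz'
      have e2 := hRI2 r r' z hz
      have hsplit : R r' z' - R r z = (R r' z' - R r' z) + (R r' z - R r z) := by abel
      have n1 : ‖R r' z' - R r' z‖ ≤ ‖z' - z‖ * (M * M) := by
        rw [e1, norm_smul]
        refine mul_le_mul_of_nonneg_left ?_ (norm_nonneg _)
        exact le_trans (ContinuousLinearMap.opNorm_comp_le _ _)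
          (mul_le_mul hb1 hb2 (norm_nonneg _) hM.le)
      have n2 : ‖R r' z - R r z‖ ≤ |r' - r| * (M * (‖V‖ * M)) := by
        rw [e2, norm_smul]
        have hcoef : ‖(r : ℂ) - (r' : ℂ)‖ = |r' - r| := by
          rw [← Complex.ofReal_sub, Complex.norm_real, Real.norm_eq_abs, abs_sub_comm]
        rw [hcoef]
        refine mul_le_mul_of_nonneg_left ?_ (abs_nonneg _)
        calc ‖R r' z ∘L (V ∘L R r z)‖ ≤ ‖R r' z‖ * ‖V ∘L R r z‖ :=
              ContinuousLinearMap.opNorm_comp_le _ _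
          _ ≤ M * (‖V‖ * M) := by
              refine mul_le_mul hb2 ?_ (norm_nonneg _) hM.le
              exact le_trans (ContinuousLinearMap.opNorm_comp_le _ _)
                (mul_le_mul_of_nonneg_left hb3 (norm_nonneg V))
      calc ‖R r' z' - R r z‖ ≤ ‖R r' z' - R r' z‖ + ‖R r' z - R r z‖ := by
            rw [hsplit]; exact norm_add_le _ _
        _ ≤ ‖z' - z‖ * (M * M) + |r' - r| * (M * (‖V‖ * M)) := add_le_add n1 n2
        _ ≤ K * D := by
            rw [hKdef, hDdef]
            nlinarith [mul_nonneg (mul_nonneg (mul_nonneg hM.le hM.le) (norm_nonneg V))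
                (norm_nonneg (z' - z)),
              mul_nonneg (mul_nonneg hM.le hM.le) (abs_nonneg (r' - r))]
    -- bound for the difference of comparison operators
    have hdB : ‖Bop V R z₀ r' z' - Bop V R z₀ r z‖ ≤ C * D := by
      have hsplit : Bop V R z₀ r' z' - Bop V R z₀ r z
          = (z' - z₀) • (R r' z' - R r z) + (z' - z) • R r z
            - ((r' : ℂ) • (V ∘L (R r' z' - R r z)) + ((r' : ℂ) - (r : ℂ)) • (V ∘L R r z)) := by
        simp only [Bop, ContinuousLinearMap.comp_sub]
        module
      have hzz₀ : ‖z' - z₀‖ ≤ ‖z - z₀‖ + 1 := by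
        calc ‖z' - z₀‖ = ‖(z' - z) + (z - z₀)‖ := by rw [sub_add_sub_cancel]
          _ ≤ ‖z' - z‖ + ‖z - z₀‖ := norm_add_le _ _
          _ ≤ ‖z - z₀‖ + 1 := by linarith
      have hr' : |r'| ≤ |r| + 1 := by
        calc |r'| = |(r' - r) + r| := by rw [sub_add_cancel]
          _ ≤ |r' - r| + |r| := abs_add_le _ _
          _ ≤ |r| + 1 := by linarith
      have t1 : ‖(z' - z₀) • (R r' z' - R r z)‖ ≤ (‖z - z₀‖ + 1) * (K * D) := by
        rw [norm_smul]
        exact mul_le_mul hzz₀ hdR (norm_nonneg _) (by positivity)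
      have t2 : ‖(z' - z) • R r z‖ ≤ D * M := by
        rw [norm_smul]
        exact mul_le_mul hzD hb3 (norm_nonneg _) hD0
      have t3 : ‖(r' : ℂ) • (V ∘L (R r' z' - R r z))‖ ≤ (|r| + 1) * (‖V‖ * (K * D)) := by
        rw [norm_smul]
        have hco : ‖((r' : ℝ) : ℂ)‖ = |r'| := by rw [Complex.norm_real, Real.norm_eq_abs]
        rw [hco]
        refine mul_le_mul hr' ?_ (norm_nonneg _) (by positivity)
        exact le_trans (ContinuousLinearMap.opNorm_comp_le _ _)
          (mul_le_mul_of_nonneg_left hdR (norm_nonneg V))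
      have t4 : ‖((r' : ℂ) - (r : ℂ)) • (V ∘L R r z)‖ ≤ D * (‖V‖ * M) := by
        rw [norm_smul]
        have hco : ‖(r' : ℂ) - (r : ℂ)‖ = |r' - r| := by
          rw [← Complex.ofReal_sub, Complex.norm_real, Real.norm_eq_abs]
        rw [hco]
        refine mul_le_mul hrD ?_ (norm_nonneg _) hD0
        exact le_trans (ContinuousLinearMap.opNorm_comp_le _ _)
          (mul_le_mul_of_nonneg_left hb3 (norm_nonneg V))
      calc ‖Bop V R z₀ r' z' - Bop V R z₀ r z‖
          = ‖(z' - z₀) • (R r' z' - R r z) + (z' - z) • R r z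
            - ((r' : ℂ) • (V ∘L (R r' z' - R r z)) + ((r' : ℂ) - (r : ℂ)) • (V ∘L R r z))‖ := by
            rw [hsplit]
        _ ≤ ‖(z' - z₀) • (R r' z' - R r z) + (z' - z) • R r z‖
            + ‖(r' : ℂ) • (V ∘L (R r' z' - R r z)) + ((r' : ℂ) - (r : ℂ)) • (V ∘L R r z)‖ :=
            norm_sub_le _ _
        _ ≤ (‖(z' - z₀) • (R r' z' - R r z)‖ + ‖(z' - z) • R r z‖)
            + (‖(r' : ℂ) • (V ∘L (R r' z' - R r z))‖
              + ‖((r' : ℂ) - (r : ℂ)) • (V ∘L R r z)‖) :=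
            add_le_add (norm_add_le _ _) (norm_add_le _ _)
        _ ≤ ((‖z - z₀‖ + 1) * (K * D) + D * M)
            + ((|r| + 1) * (‖V‖ * (K * D)) + D * (‖V‖ * M)) :=
            add_le_add (add_le_add t1 t2) (add_le_add t3 t4)
        _ = C * D := by rw [hCdef]; ring
    -- final estimate
    have hdiff : V ∘L R r' z' - V ∘L R r z
        = (V ∘L R 0 z₀) ∘L (Bop V R z₀ r' z' - Bop V R z₀ r z) := by
      rw [hVR r' z' hz', hVR r z hz, ContinuousLinearMap.comp_sub]
    have hfinal : schattenNorm p (V ∘L R r' z' - V ∘L R r z) ≤ N * (C * D) := by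
      rw [hdiff]
      refine le_trans (schattenNorm_comp_le hp h0 _) ?_
      rw [← hNdef]
      exact mul_le_mul_of_nonneg_left hdB hN
    have hlast : N * (C * D) < ε := by
      have h1 : C * D ≤ C * (ε / (C * (N + 1))) :=
        mul_le_mul_of_nonneg_left hD2.le hC.le
      have h3 : C * (ε / (C * (N + 1))) = ε / (N + 1) := by
        field_simp
      have h4 : C * D ≤ ε / (N + 1) := by rw [← h3]; exact h1
      have h5 : N * (C * D) ≤ N * (ε / (N + 1)) := mul_le_mul_of_nonneg_left h4 hN
      have h6 : N * (ε / (N + 1)) < ε := by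
        rw [← mul_div_assoc, div_lt_iff₀ (by positivity : (0:ℝ) < N + 1)]
        nlinarith
      linarith
    exact lt_of_le_of_lt hfinal hlast
end
end

section
/- Let $f : \mathbb{C} \to \mathcal{B}(\mathcal{H})$ be a function that is meromorphic on a neighborhood of a real point $r_0$, and suppose $f(r)$ is unitary for all real $r \neq r_0$ near $r_0$. Then $f$ extends analytically to $r_0$ (i.e., $r_0$ is a removable singularity). -/
noncomputable section

variable {H : Type*} [NormedAddCommGroup H] [InnerProductSpace ℂ H] [CompleteSpace H]

lemma unitary_norm_le_one (u : H →L[ℂ] H) (hu : u ∈ unitary (H →L[ℂ] H)) : ‖u‖ ≤ 1 := by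
  have h1 : star u * u = 1 := hu.1
  have h2 : ‖star u * u‖ = ‖u‖ * ‖u‖ := CStarRing.norm_star_mul_self
  rw [h1] at h2
  have h3 : ‖(1 : H →L[ℂ] H)‖ ≤ 1 := by
    rw [ContinuousLinearMap.one_def]; exact ContinuousLinearMap.norm_id_le
  nlinarith [norm_nonneg u]

/-- If `f : ℂ → B(H)` is meromorphic at a real point `r₀` and `f r` is
unitary for all real `r ≠ r₀` near `r₀`, then `r₀` is a removable singularity: `f` agrees
near `r₀` (off `r₀`) with a function analytic at `r₀`. -/
theorem meromorphic_unitary_removable_singularity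
    (f : ℂ → H →L[ℂ] H) (r₀ : ℝ)
    (hf : MeromorphicAt f (r₀ : ℂ))
    (hU : ∃ δ > (0 : ℝ), ∀ t : ℝ, t ≠ r₀ → |t - r₀| < δ →
      f (t : ℂ) ∈ unitary (H →L[ℂ] H)) :
    ∃ g : ℂ → H →L[ℂ] H, AnalyticAt ℂ g (r₀ : ℂ) ∧
      ∀ᶠ w in nhdsWithin (r₀ : ℂ) {(r₀ : ℂ)}ᶜ, g w = f w := by
  obtain ⟨δ, hδ, hUδ⟩ := hU
  rcases eq_or_ne (meromorphicOrderAt f (r₀ : ℂ)) ⊤ with htop | hne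
  · refine ⟨fun _ => 0, analyticAt_const, ?_⟩
    filter_upwards [meromorphicOrderAt_eq_top_iff.mp htop] with z hz
    rw [hz]
  · obtain ⟨n, hn⟩ := WithTop.ne_top_iff_exists.mp hne
    obtain ⟨g, hg, hg0, heq⟩ := (meromorphicOrderAt_eq_int_iff hf).mp hn.symm
    rcases le_or_gt 0 n with hn0 | hn0
    · refine ⟨fun z => (z - r₀) ^ n.toNat • g z, ?_, ?_⟩
      · exact (((analyticAt_id).sub analyticAt_const).pow _).smul hg
      · filter_upwards [heq] with z hz
        rw [hz, ← zpow_natCast, Int.toNat_of_nonneg hn0]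
    · -- contradiction: along real sequence t_k → r₀, ‖g t_k‖ → 0 but g r₀ ≠ 0
      exfalso
      set s : ℕ → ℝ := fun k => r₀ + 1 / (k + 1) with hs
      have hs_pos : ∀ k : ℕ, (0:ℝ) < 1 / (k + 1) := fun k => by positivity
      have hs_ne : ∀ k, s k ≠ r₀ := fun k => by
        simp only [hs]; intro h; nlinarith [hs_pos k]
      have hs_tend : Filter.Tendsto s Filter.atTop (nhds r₀) := by
        have h0 := tendsto_one_div_add_atTop_nhds_zero_nat (𝕜 := ℝ)
        have := (tendsto_const_nhds (x := r₀) (f := Filter.atTop)).add h0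
        simpa [hs] using this
      have hsc_tend : Filter.Tendsto (fun k => ((s k : ℝ) : ℂ)) Filter.atTop
          (nhdsWithin (r₀ : ℂ) {(r₀ : ℂ)}ᶜ) := by
        rw [tendsto_nhdsWithin_iff]
        constructor
        · exact (Complex.continuous_ofReal.tendsto r₀).comp hs_tend
        · exact Filter.Eventually.of_forall fun k => by
            simpa using fun h => hs_ne k (by exact_mod_cast h)
      have hev : ∀ᶠ k in Filter.atTop,
          f (s k : ℂ) = ((s k : ℂ) - r₀) ^ n • g (s k : ℂ) := hsc_tend.eventually heq
      have hδev : ∀ᶠ k in Filter.atTop, |s k - r₀| < δ := by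
        have := hs_tend.eventually (eventually_abs_sub_lt r₀ hδ)
        exact this
      -- bound: ‖g (s k)‖ ≤ (1/(k+1))^(-n).toNat
      have hbound : ∀ᶠ k in Filter.atTop, ‖g (s k : ℂ)‖ ≤ 1 / (k + 1) := by
        filter_upwards [hev, hδev] with k hk hkδ
        have hne0 : ((s k : ℂ) - r₀) ≠ 0 := by
          intro h
          exact hs_ne k (by exact_mod_cast sub_eq_zero.mp h)
        have hgk : g (s k : ℂ) = ((s k : ℂ) - r₀) ^ (-n) • f (s k : ℂ) := by
          rw [hk, smul_smul, ← zpow_add₀ hne0]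
          simp
        have hnorm : ‖((s k : ℂ) - r₀)‖ = 1 / (k + 1) := by
          have : ((s k : ℂ) - r₀) = ((1 / (k + 1) : ℝ) : ℂ) := by
            push_cast [hs]; ring
          rw [this, Complex.norm_real, Real.norm_eq_abs, abs_of_pos (hs_pos k)]
        have hfle : ‖f (s k : ℂ)‖ ≤ 1 := unitary_norm_le_one _ (hUδ _ (hs_ne k) hkδ)
        calc ‖g (s k : ℂ)‖ = ‖((s k : ℂ) - r₀) ^ (-n)‖ * ‖f (s k : ℂ)‖ := by
              rw [hgk, norm_smul]
          _ ≤ ‖((s k : ℂ) - r₀) ^ (-n)‖ * 1 := by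
              exact mul_le_mul_of_nonneg_left hfle (norm_nonneg _)
          _ = (1 / (k + 1)) ^ (-n) := by rw [mul_one, norm_zpow, hnorm]
          _ ≤ 1 / (k + 1) := by
              have h1 : (1:ℝ) / (k + 1) ≤ 1 := by
                rw [div_le_one (by positivity)]; linarith [Nat.cast_nonneg (α := ℝ) k]
              calc ((1:ℝ) / (k + 1)) ^ (-n) ≤ (1 / (k + 1)) ^ (1:ℤ) :=
                    zpow_le_zpow_right_of_le_one₀ (hs_pos k) h1 (by omega)
                _ = 1 / (k + 1) := zpow_one _
      have hg_tend : Filter.Tendsto (fun k => ‖g (s k : ℂ)‖) Filter.atTop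
          (nhds ‖g (r₀ : ℂ)‖) :=
        (hg.continuousAt.tendsto.comp
          ((Complex.continuous_ofReal.tendsto r₀).comp hs_tend)).norm
      have h0 : Filter.Tendsto (fun k : ℕ => 1 / ((k:ℝ) + 1)) Filter.atTop (nhds 0) :=
        tendsto_one_div_add_atTop_nhds_zero_nat
      have : ‖g (r₀ : ℂ)‖ ≤ 0 :=
        le_of_tendsto_of_tendsto hg_tend h0 hbound
      exact hg0 (norm_le_zero_iff.mp this)
end
end
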